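/- arXiv:1003.5309 — 4 statements merged into one kernel-verified Lean document; each statement's English description precedes it below -/
import Mathlib

section
/- Let (W(t))_{t≥0} be i.i.d. random n×n matrices taking finitely many values, each almost surely symmetric, doubly stochastic, and a projection (W² = W), and define x(t+1) = W(t)x(t) for a deterministic x(0) ∈ ℝⁿ. Then for all t ≥ 0, E[‖x(t) − x_ave·1‖²] ≤ λ₂(E[W(0)])ᵗ · ‖x(0) − x_ave·1‖². -/
open Matrix

lemma countP_le_of_sorted {l : List ℝ} {x : ℝ} {i : ℕ} (hi : i < l.length)
    (hx : ∀ j (hj : j < l.length), j ≤ i → l[j] ≤ x) :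
    l.countP (fun a => decide (x < a)) ≤ l.length - 1 - i := by
  have hsplit := List.take_append_drop (i + 1) l
  have hcount : l.countP (fun a => decide (x < a))
      = (l.take (i+1)).countP (fun a => decide (x < a))
        + (l.drop (i+1)).countP (fun a => decide (x < a)) := by
    conv_lhs => rw [← hsplit]
    rw [List.countP_append]
  have htake : (l.take (i+1)).countP (fun a => decide (x < a)) = 0 := by
    rw [List.countP_eq_zero]
    intro a ha
    rw [List.mem_iff_getElem] at ha
    obtain ⟨j, hj, rfl⟩ := ha
    have hj' := hj
    rw [List.length_take] at hj'
    have hjlen : j < l.length := lt_of_lt_of_le hj' (min_le_right _ _)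
    have hji : j ≤ i := by
      have : j < i + 1 := lt_of_lt_of_le hj' (min_le_left _ _)
      omega
    simp only [List.getElem_take, decide_eq_true_eq]
    exact not_lt.mpr (hx j hjlen hji)
  have hdrop : (l.drop (i+1)).countP (fun a => decide (x < a)) ≤ l.length - (i+1) := by
    calc (l.drop (i+1)).countP (fun a => decide (x < a)) ≤ (l.drop (i+1)).length :=
          List.countP_le_length
    _ = l.length - (i+1) := List.length_drop
  omega

/-- The second largest eigenvalue (counted with multiplicity) of a symmetric real
matrix: sort the `n` eigenvalues in increasing order and take the `(n-2)`-th
(junk value `0` if the matrix is not Hermitian). -/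
noncomputable def lambda2 {n : ℕ} (A : Matrix (Fin n) (Fin n) ℝ) : ℝ :=
  if h : A.IsHermitian then
    ((Finset.univ.val.map h.eigenvalues).sort (· ≤ ·)).getD (n - 2) 0
  else 0

section
variable {n : ℕ} {A : Matrix (Fin n) (Fin n) ℝ} (hA : A.IsHermitian)

lemma lambda2_exists_eig (hn : 0 < n) : ∃ i, lambda2 A = hA.eigenvalues i := by
  classical
  set l : List ℝ := (Finset.univ.val.map hA.eigenvalues).sort (· ≤ ·) with hl
  have hlen : l.length = n := by
    rw [hl, Multiset.length_sort]
    simp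
  have hidx : n - 2 < l.length := by omega
  have hmem : l[n-2] ∈ l := List.getElem_mem _
  have : l[n-2] ∈ (Finset.univ.val.map hA.eigenvalues) := by
    rw [← Multiset.mem_sort (· ≤ ·)]
    exact hmem
  obtain ⟨i, _, hi⟩ := Multiset.mem_map.mp this
  refine ⟨i, ?_⟩
  rw [lambda2, dif_pos hA, ← hl, List.getD_eq_getElem _ _ hidx, hi]

lemma lambda2_card_le_one (hn : 0 < n) :
    (Finset.univ.filter (fun i => lambda2 A < hA.eigenvalues i)).card ≤ 1 := by
  classical
  set l : List ℝ := (Finset.univ.val.map hA.eigenvalues).sort (· ≤ ·) with hl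
  have hlen : l.length = n := by
    rw [hl, Multiset.length_sort]
    simp
  have hidx : n - 2 < l.length := by omega
  have hlam : lambda2 A = l[n-2] := by
    rw [lambda2, dif_pos hA, ← hl, List.getD_eq_getElem _ _ hidx]
  have hsorted : l.Pairwise (· ≤ ·) := Multiset.pairwise_sort _ _
  have hx : ∀ j (hj : j < l.length), j ≤ n - 2 → l[j] ≤ lambda2 A := by
    intro j hj hji
    rw [hlam]
    have := hsorted.rel_get_of_le (a := ⟨j, hj⟩) (b := ⟨n-2, hidx⟩) (by simpa using hji)
    simpa using this
  have hcount := countP_le_of_sorted hidx hx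
  have h2 : Multiset.countP (fun i => lambda2 A < hA.eigenvalues i) Finset.univ.val
      = Multiset.countP (fun a => lambda2 A < a) (Finset.univ.val.map hA.eigenvalues) := by
    rw [Multiset.countP_map, Multiset.countP_eq_card_filter]
  have h1 : Multiset.countP (fun a => lambda2 A < a) (Finset.univ.val.map hA.eigenvalues)
      = List.countP (fun a => decide (lambda2 A < a)) l := by
    conv_lhs => rw [← Multiset.sort_eq (Finset.univ.val.map hA.eigenvalues) (· ≤ ·)]
    rw [Multiset.coe_countP]
  have hcard : (Finset.univ.filter (fun i => lambda2 A < hA.eigenvalues i)).card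
      = l.countP (fun a => decide (lambda2 A < a)) := by
    rw [Finset.card_def, Finset.filter_val, ← Multiset.countP_eq_card_filter, h2, h1]
  rw [hcard]
  omega
end

lemma inner_dot {n : ℕ} (x y : EuclideanSpace ℝ (Fin n)) :
    (inner ℝ x y : ℝ) = (WithLp.equiv 2 (Fin n → ℝ) x) ⬝ᵥ (WithLp.equiv 2 (Fin n → ℝ) y) := by
  simp [PiLp.inner_apply, RCLike.inner_apply, dotProduct, mul_comm]

section
variable {n : ℕ} {A : Matrix (Fin n) (Fin n) ℝ} (hA : A.IsHermitian)

lemma unorm (j : Fin n) :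
    (WithLp.equiv 2 (Fin n → ℝ)) (hA.eigenvectorBasis j) ⬝ᵥ
      (WithLp.equiv 2 (Fin n → ℝ)) (hA.eigenvectorBasis j) = 1 := by
  rw [← inner_dot]
  have := orthonormal_iff_ite.mp hA.eigenvectorBasis.orthonormal j j
  simpa using this

lemma eig_eq_dot (j : Fin n) :
    hA.eigenvalues j =
      (WithLp.equiv 2 (Fin n → ℝ)) (hA.eigenvectorBasis j) ⬝ᵥ
        (A *ᵥ (WithLp.equiv 2 (Fin n → ℝ)) (hA.eigenvectorBasis j)) := by
  rw [WithLp.equiv_apply, hA.mulVec_eigenvectorBasis, ← WithLp.equiv_apply, dotProduct_smul, unorm hA, smul_eq_mul, mul_one]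


end

lemma hAT {n : ℕ} {A : Matrix (Fin n) (Fin n) ℝ} (hA : A.IsHermitian) : Aᵀ = A := by
  have h := hA.eq
  rwa [Matrix.conjTranspose_eq_transpose_of_trivial] at h

lemma dot_mulVec_symm {n : ℕ} {A : Matrix (Fin n) (Fin n) ℝ} (hA : A.IsHermitian)
    (v w : Fin n → ℝ) :
    v ⬝ᵥ (A *ᵥ w) = (A *ᵥ v) ⬝ᵥ w := by
  rw [dotProduct_mulVec, ← mulVec_transpose, hAT hA]

lemma quad_le_lambda2 {n : ℕ} (hn : 0 < n) {A : Matrix (Fin n) (Fin n) ℝ}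
    (hA : A.IsHermitian)
    (hA1 : A *ᵥ (fun _ => (1:ℝ)) = fun _ => (1:ℝ))
    (hq1 : ∀ v : Fin n → ℝ, v ⬝ᵥ (A *ᵥ v) ≤ v ⬝ᵥ v)
    (y : Fin n → ℝ) (hy : ∑ i, y i = 0) :
    y ⬝ᵥ (A *ᵥ y) ≤ lambda2 A * (y ⬝ᵥ y) := by
  classical
  set b := hA.eigenvectorBasis with hb
  set u : Fin n → (Fin n → ℝ) := fun j => WithLp.equiv 2 (Fin n → ℝ) (b j) with hu
  have hAu : ∀ j, A *ᵥ u j = hA.eigenvalues j • u j := fun j => hA.mulVec_eigenvectorBasis j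
  have hle1 : ∀ j, hA.eigenvalues j ≤ 1 := by
    intro j
    rw [eig_eq_dot hA j]
    calc u j ⬝ᵥ (A *ᵥ u j) ≤ u j ⬝ᵥ u j := hq1 _
    _ = 1 := unorm hA j
  set Y : EuclideanSpace ℝ (Fin n) := (WithLp.equiv 2 (Fin n → ℝ)).symm y with hYdef
  set e : Fin n → ℝ := fun _ => 1 with he
  set Eo : EuclideanSpace ℝ (Fin n) := (WithLp.equiv 2 (Fin n → ℝ)).symm e with hEodef
  have heq_y : WithLp.equiv 2 (Fin n → ℝ) Y = y := Equiv.apply_symm_apply _ _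
  have heq_e : WithLp.equiv 2 (Fin n → ℝ) Eo = e := Equiv.apply_symm_apply _ _
  have hinner_bY : ∀ i, (inner ℝ (b i) Y : ℝ) = u i ⬝ᵥ y := by
    intro i; rw [inner_dot, heq_y]
  have hinner_bE : ∀ i, (inner ℝ (b i) Eo : ℝ) = u i ⬝ᵥ e := by
    intro i; rw [inner_dot, heq_e]
  have hinner_Yb : ∀ i, (inner ℝ Y (b i) : ℝ) = u i ⬝ᵥ y := by
    intro i; rw [real_inner_comm]; exact hinner_bY i
  have hyy : y ⬝ᵥ y = ∑ i, (u i ⬝ᵥ y) * (u i ⬝ᵥ y) := by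
    have h1 : (inner ℝ Y Y : ℝ) = y ⬝ᵥ y := by rw [inner_dot, heq_y]
    have h2 := b.sum_inner_mul_inner Y Y
    rw [← h1, ← h2]
    refine Finset.sum_congr rfl fun i _ => ?_
    rw [hinner_Yb i, hinner_bY i]
  have hyAy : y ⬝ᵥ (A *ᵥ y) = ∑ i, hA.eigenvalues i * ((u i ⬝ᵥ y) * (u i ⬝ᵥ y)) := by
    set Z : EuclideanSpace ℝ (Fin n) := (WithLp.equiv 2 (Fin n → ℝ)).symm (A *ᵥ y) with hZdef
    have hZ : WithLp.equiv 2 (Fin n → ℝ) Z = A *ᵥ y := Equiv.apply_symm_apply _ _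
    have h1 : (inner ℝ Y Z : ℝ) = y ⬝ᵥ (A *ᵥ y) := by rw [inner_dot, heq_y, hZ]
    have h2 := b.sum_inner_mul_inner Y Z
    have h3 : ∀ i, (inner ℝ (b i) Z : ℝ) = hA.eigenvalues i * (u i ⬝ᵥ y) := by
      intro i
      rw [inner_dot, hZ, dot_mulVec_symm hA, hAu i, smul_dotProduct, smul_eq_mul]
    rw [← h1, ← h2]
    refine Finset.sum_congr rfl fun i _ => ?_
    rw [h3 i, hinner_Yb i]
    ring
  have hdones : ∀ j, hA.eigenvalues j * (u j ⬝ᵥ e) = u j ⬝ᵥ e := by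
    intro j
    have h : u j ⬝ᵥ (A *ᵥ e) = u j ⬝ᵥ e := by rw [hA1]
    rwa [dot_mulVec_symm hA, hAu j, smul_dotProduct, smul_eq_mul] at h
  have hkey : ∀ i, lambda2 A < hA.eigenvalues i → u i ⬝ᵥ y = 0 := by
    intro i0 hi0
    have hlt1 : lambda2 A < 1 := lt_of_lt_of_le hi0 (hle1 i0)
    have hcard := lambda2_card_le_one hA hn
    have hmem : i0 ∈ Finset.univ.filter (fun i => lambda2 A < hA.eigenvalues i) := by
      simp [hi0]
    have huniq : ∀ j, lambda2 A < hA.eigenvalues j → j = i0 := by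
      intro j hj
      exact Finset.card_le_one.mp hcard _ (by simp [hj]) _ hmem
    have hdzero : ∀ j, j ≠ i0 → (inner ℝ (b j) Eo : ℝ) = 0 := by
      intro j hj
      rw [hinner_bE j]
      by_contra hne
      have hl1 : hA.eigenvalues j = 1 := by
        have h := hdones j
        have := mul_right_cancel₀ hne (by rw [h, one_mul] : hA.eigenvalues j * (u j ⬝ᵥ e) = 1 * (u j ⬝ᵥ e))
        exact this
      exact hj (huniq j (by rw [hl1]; exact hlt1))
    have hsingle : ∑ j, b.repr Eo j • b j = b.repr Eo i0 • b i0 := by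
      apply Finset.sum_eq_single i0
      · intro j _ hj
        rw [b.repr_apply_apply, hdzero j hj, zero_smul]
      · intro h; exact absurd (Finset.mem_univ i0) h
    have hEor : ((inner ℝ (b i0) Eo : ℝ)) • b i0 = Eo := by
      rw [← b.repr_apply_apply, ← hsingle]
      exact b.sum_repr Eo
    have hdi0 : (inner ℝ (b i0) Eo : ℝ) ≠ 0 := by
      intro h0
      have hE0 : Eo = 0 := by rw [← hEor, h0, zero_smul]
      have h1 : (inner ℝ Eo Eo : ℝ) = (n : ℝ) := by
        rw [inner_dot, heq_e]
        simp [he, dotProduct]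
      rw [hE0] at h1
      simp only [inner_zero_left] at h1
      exact absurd h1.symm (Nat.cast_pos.mpr hn).ne'
    have h2 : (inner ℝ Eo Y : ℝ) = 0 := by
      rw [inner_dot, heq_e, heq_y]
      simpa [he, dotProduct] using hy
    rw [← hEor, real_inner_smul_left, hinner_bY] at h2
    rcases mul_eq_zero.mp h2 with h | h
    · exact absurd h hdi0
    · exact h
  rw [hyAy, hyy, Finset.mul_sum]
  apply Finset.sum_le_sum
  intro i _
  rcases le_or_gt (hA.eigenvalues i) (lambda2 A) with h | h
  · exact mul_le_mul_of_nonneg_right h (mul_self_nonneg _)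
  · rw [hkey i h]
    simp

lemma sum_mulVec' {n : ℕ} {ι : Type*} [Fintype ι] (M : ι → Matrix (Fin n) (Fin n) ℝ)
    (v : Fin n → ℝ) : (∑ ω, M ω) *ᵥ v = ∑ ω, (M ω *ᵥ v) := by
  funext i
  simp only [mulVec, dotProduct, Matrix.sum_apply, Finset.sum_apply, Finset.sum_mul]
  exact Finset.sum_comm

lemma dot_sum' {n : ℕ} {ι : Type*} [Fintype ι] (z : Fin n → ℝ) (w : ι → Fin n → ℝ) :
    z ⬝ᵥ (∑ ω, w ω) = ∑ ω, z ⬝ᵥ w ω := by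
  simp only [dotProduct, Finset.sum_apply, Finset.mul_sum]
  exact Finset.sum_comm

/-- The gossip trajectory: `traj W x0 0 _ = x0` and
`traj W x0 (t+1) σ = W (σ t) *ᵥ traj W x0 t (σ restricted)`, i.e. the solution of
`x(t+1) = W(t) x(t)` driven by the i.i.d. outcomes `σ`. -/
noncomputable def traj {n : ℕ} {Ω : Type*} (W : Ω → Matrix (Fin n) (Fin n) ℝ)
    (x0 : Fin n → ℝ) : (t : ℕ) → (Fin t → Ω) → (Fin n → ℝ)
  | 0, _ => x0
  | t + 1, σ => W (σ (Fin.last t)) *ᵥ traj W x0 t (fun k => σ k.castSucc)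

/-- Let `(W(t))` be i.i.d. random `n × n` matrices taking finitely many values
(common law `p` on a finite set of outcomes `Ω`), each almost surely symmetric,
doubly stochastic, and a projection, and let `x(t+1) = W(t) x(t)` from a
deterministic `x(0)`.  Then for all `t ≥ 0`,
`E[‖x(t) − x_ave·1‖²] ≤ λ₂(E[W(0)])ᵗ · ‖x(0) − x_ave·1‖²`
(Euclidean norms written via the dot product). -/
theorem expect_sq_error_le_lambda2_pow {n : ℕ} {Ω : Type*} [Fintype Ω]
    (p : Ω → ℝ) (hp : ∀ ω, 0 ≤ p ω) (hsum : ∑ ω, p ω = 1)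
    (W : Ω → Matrix (Fin n) (Fin n) ℝ)
    (hsymm : ∀ ω, 0 < p ω → (W ω).IsSymm)
    (hnonneg : ∀ ω, 0 < p ω → ∀ i j, 0 ≤ W ω i j)
    (hrow : ∀ ω, 0 < p ω → ∀ i, ∑ j, W ω i j = 1)
    (hcol : ∀ ω, 0 < p ω → ∀ j, ∑ i, W ω i j = 1)
    (hproj : ∀ ω, 0 < p ω → W ω * W ω = W ω)
    (x0 : Fin n → ℝ) (t : ℕ) :
    ∑ σ : Fin t → Ω, (∏ k, p (σ k)) *
        ((traj W x0 t σ - ((∑ i, x0 i) / n) • fun _ => (1 : ℝ)) ⬝ᵥ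
          (traj W x0 t σ - ((∑ i, x0 i) / n) • fun _ => (1 : ℝ)))
      ≤ lambda2 (∑ ω, p ω • W ω) ^ t *
        ((x0 - ((∑ i, x0 i) / n) • fun _ => (1 : ℝ)) ⬝ᵥ
          (x0 - ((∑ i, x0 i) / n) • fun _ => (1 : ℝ))) := by
  classical
  rcases Nat.eq_zero_or_pos n with hn0 | hn
  · subst hn0
    simp [dotProduct]
  set s : ℝ := (∑ i, x0 i) / n with hs
  set cvec : Fin n → ℝ := s • fun _ => (1:ℝ) with hcvec
  set A : Matrix (Fin n) (Fin n) ℝ := ∑ ω, p ω • W ω with hA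
  have hpzero : ∀ ω, ¬ (0 < p ω) → p ω = 0 := fun ω h => le_antisymm (not_lt.mp h) (hp ω)
  have hA_herm : A.IsHermitian := by
    show Aᴴ = A
    rw [conjTranspose_eq_transpose_of_trivial, hA, Matrix.transpose_sum]
    refine Finset.sum_congr rfl fun ω _ => ?_
    rw [Matrix.transpose_smul]
    by_cases hω : 0 < p ω
    · rw [(hsymm ω hω).eq]
    · rw [hpzero ω hω]; simp
  have hrow' : ∀ ω, 0 < p ω → W ω *ᵥ (fun _ => (1:ℝ)) = fun _ => (1:ℝ) := by
    intro ω hω; funext i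
    simp only [mulVec, dotProduct, mul_one]
    exact hrow ω hω i
  have hA1 : A *ᵥ (fun _ => (1:ℝ)) = fun _ => (1:ℝ) := by
    rw [hA, sum_mulVec']
    have h : ∀ ω : Ω, (p ω • W ω) *ᵥ (fun _ => (1:ℝ)) = p ω • (fun _ => (1:ℝ)) := by
      intro ω
      rw [smul_mulVec]
      by_cases hω : 0 < p ω
      · rw [hrow' ω hω]
      · rw [hpzero ω hω]; simp
    rw [Finset.sum_congr rfl (fun ω _ => h ω), ← Finset.sum_smul, hsum, one_smul]
  have hW_herm : ∀ ω, 0 < p ω → (W ω).IsHermitian := by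
    intro ω hω
    show _ᴴ = _
    rw [conjTranspose_eq_transpose_of_trivial, (hsymm ω hω).eq]
  have hprojdot : ∀ ω, 0 < p ω → ∀ v : Fin n → ℝ,
      (W ω *ᵥ v) ⬝ᵥ (W ω *ᵥ v) = v ⬝ᵥ (W ω *ᵥ v) := by
    intro ω hω v
    rw [dot_mulVec_symm (hW_herm ω hω), mulVec_mulVec, hproj ω hω, dotProduct_comm]
  have hdotA : ∀ v : Fin n → ℝ, v ⬝ᵥ (A *ᵥ v) = ∑ ω, p ω * (v ⬝ᵥ (W ω *ᵥ v)) := by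
    intro v
    rw [hA, sum_mulVec', dot_sum']
    refine Finset.sum_congr rfl fun ω _ => ?_
    rw [smul_mulVec, dotProduct_smul, smul_eq_mul]
  have hq0 : ∀ v : Fin n → ℝ, 0 ≤ v ⬝ᵥ (A *ᵥ v) := by
    intro v
    rw [hdotA v]
    apply Finset.sum_nonneg
    intro ω _
    by_cases hω : 0 < p ω
    · have h1 := hprojdot ω hω v
      have hnn : 0 ≤ (W ω *ᵥ v) ⬝ᵥ (W ω *ᵥ v) :=
        Finset.sum_nonneg fun i _ => mul_self_nonneg _
      rw [h1] at hnn
      exact mul_nonneg (hp ω) hnn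
    · rw [hpzero ω hω]; simp
  have hq1 : ∀ v : Fin n → ℝ, v ⬝ᵥ (A *ᵥ v) ≤ v ⬝ᵥ v := by
    intro v
    rw [hdotA v]
    calc ∑ ω, p ω * (v ⬝ᵥ (W ω *ᵥ v)) ≤ ∑ ω, p ω * (v ⬝ᵥ v) := by
          apply Finset.sum_le_sum
          intro ω _
          by_cases hω : 0 < p ω
          · refine mul_le_mul_of_nonneg_left ?_ (hp ω)
            have h1 := hprojdot ω hω v
            have hsq : 0 ≤ (v - W ω *ᵥ v) ⬝ᵥ (v - W ω *ᵥ v) :=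
              Finset.sum_nonneg fun i _ => mul_self_nonneg _
            have hexp : (v - W ω *ᵥ v) ⬝ᵥ (v - W ω *ᵥ v)
                = v ⬝ᵥ v - v ⬝ᵥ (W ω *ᵥ v) := by
              rw [sub_dotProduct, dotProduct_sub, dotProduct_sub, h1,
                dotProduct_comm (W ω *ᵥ v) v]
              ring
            rw [hexp] at hsq
            linarith
          · rw [hpzero ω hω]; simp
    _ = v ⬝ᵥ v := by rw [← Finset.sum_mul, hsum, one_mul]
  have hl2 : 0 ≤ lambda2 A := by
    obtain ⟨i, hi⟩ := lambda2_exists_eig hA_herm hn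
    rw [hi, eig_eq_dot hA_herm i]
    exact hq0 _
  have hsum_traj : ∀ (r : ℕ) (τ : Fin r → Ω), (∀ k, 0 < p (τ k)) →
      ∑ i, traj W x0 r τ i = ∑ i, x0 i := by
    intro r
    induction r with
    | zero => intro τ _; rfl
    | succ r ih =>
      intro τ hτ
      have h1 : traj W x0 (r+1) τ
          = W (τ (Fin.last r)) *ᵥ traj W x0 r (fun k => τ k.castSucc) := rfl
      rw [h1]
      have hc : ∑ i, (W (τ (Fin.last r)) *ᵥ traj W x0 r (fun k => τ k.castSucc)) i
          = ∑ j, traj W x0 r (fun k => τ k.castSucc) j := by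
        simp only [mulVec, dotProduct]
        rw [Finset.sum_comm]
        refine Finset.sum_congr rfl fun j _ => ?_
        rw [← Finset.sum_mul, hcol _ (hτ _) j, one_mul]
      rw [hc]
      exact ih (fun k => τ k.castSucc) (fun k => hτ _)
  have hWc : ∀ ω, 0 < p ω → W ω *ᵥ cvec = cvec := by
    intro ω hω
    rw [hcvec, mulVec_smul, hrow' ω hω]
  have horth : ∀ (r : ℕ) (τ : Fin r → Ω), (∀ k, 0 < p (τ k)) →
      ∑ i, (traj W x0 r τ - cvec) i = 0 := by
    intro r τ hτ
    simp only [Pi.sub_apply, Finset.sum_sub_distrib, hsum_traj r τ hτ]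
    have hcv : ∀ i : Fin n, cvec i = s := by
      intro i; rw [hcvec]; simp
    rw [Finset.sum_congr rfl (fun i _ => hcv i), Finset.sum_const, Finset.card_univ,
      Fintype.card_fin, nsmul_eq_mul, hs]
    field_simp
    ring
  have htraj : ∀ (r : ℕ) (τ : Fin r → Ω) (ω : Ω),
      traj W x0 (r+1) (Fin.snoc τ ω) = W ω *ᵥ traj W x0 r τ := by
    intro r τ ω
    have h2 : (fun k : Fin r => Fin.snoc (α := fun _ => Ω) τ ω k.castSucc) = τ := by
      funext k; rw [Fin.snoc_castSucc]
    simp only [traj, Fin.snoc_last, h2]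
  induction t with
  | zero =>
    rw [pow_zero, one_mul]
    have h0 : ∀ σ : Fin 0 → Ω, traj W x0 0 σ = x0 := fun _ => rfl
    simp [h0]
  | succ t ih =>
    have hbij : Function.Bijective
        (fun x : Ω × (Fin t → Ω) => Fin.snoc (α := fun _ => Ω) x.2 x.1) :=
      (Fin.snocEquiv (fun _ : Fin (t+1) => Ω)).bijective
    have h1 : ∑ x : Ω × (Fin t → Ω),
          ((∏ k, p (Fin.snoc (α := fun _ => Ω) x.2 x.1 k)) *
            ((traj W x0 (t+1) (Fin.snoc x.2 x.1) - cvec) ⬝ᵥ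
              (traj W x0 (t+1) (Fin.snoc x.2 x.1) - cvec)))
        = ∑ σ : Fin (t+1) → Ω, ((∏ k, p (σ k)) *
            ((traj W x0 (t+1) σ - cvec) ⬝ᵥ (traj W x0 (t+1) σ - cvec))) :=
      Fintype.sum_bijective _ hbij _ _ (fun x => rfl)
    have hre : (∑ σ : Fin (t+1) → Ω, (∏ k, p (σ k)) *
          ((traj W x0 (t+1) σ - cvec) ⬝ᵥ (traj W x0 (t+1) σ - cvec)))
        = ∑ τ : Fin t → Ω, ∑ ω : Ω, ((∏ k, p (τ k)) * p ω) *
            ((W ω *ᵥ traj W x0 t τ - cvec) ⬝ᵥ (W ω *ᵥ traj W x0 t τ - cvec)) := by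
      rw [← h1, Fintype.sum_prod_type, Finset.sum_comm]
      refine Finset.sum_congr rfl fun τ _ => Finset.sum_congr rfl fun ω _ => ?_
      rw [Fin.prod_univ_castSucc]
      simp only [Fin.snoc_castSucc, Fin.snoc_last]
      rw [htraj t τ ω]
    have hstep : ∀ τ : Fin t → Ω,
        ∑ ω : Ω, ((∏ k, p (τ k)) * p ω) *
            ((W ω *ᵥ traj W x0 t τ - cvec) ⬝ᵥ (W ω *ᵥ traj W x0 t τ - cvec))
          ≤ lambda2 A * ((∏ k, p (τ k)) *
            ((traj W x0 t τ - cvec) ⬝ᵥ (traj W x0 t τ - cvec))) := by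
      intro τ
      by_cases hqpos : ∀ k, 0 < p (τ k)
      · set z : Fin n → ℝ := traj W x0 t τ - cvec with hz
        have hzsum : ∑ i, z i = 0 := horth t τ hqpos
        have hterm : ∀ ω : Ω, ((∏ k, p (τ k)) * p ω) *
              ((W ω *ᵥ traj W x0 t τ - cvec) ⬝ᵥ (W ω *ᵥ traj W x0 t τ - cvec))
            = (∏ k, p (τ k)) * (p ω * (z ⬝ᵥ (W ω *ᵥ z))) := by
          intro ω
          by_cases hω : 0 < p ω
          · have hWz : W ω *ᵥ traj W x0 t τ - cvec = W ω *ᵥ z := by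
              rw [hz, mulVec_sub, hWc ω hω]
            rw [hWz, hprojdot ω hω z]
            ring
          · rw [hpzero ω hω]; ring
        rw [Finset.sum_congr rfl (fun ω _ => hterm ω), ← Finset.mul_sum, ← hdotA z]
        have hquad := quad_le_lambda2 hn hA_herm hA1 hq1 z hzsum
        calc (∏ k, p (τ k)) * (z ⬝ᵥ (A *ᵥ z))
            ≤ (∏ k, p (τ k)) * (lambda2 A * (z ⬝ᵥ z)) :=
              mul_le_mul_of_nonneg_left hquad (Finset.prod_nonneg fun k _ => hp _)
        _ = lambda2 A * ((∏ k, p (τ k)) * (z ⬝ᵥ z)) := by ring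
      · push_neg at hqpos
        obtain ⟨k0, hk0⟩ := hqpos
        have hq0' : (∏ k, p (τ k)) = 0 :=
          Finset.prod_eq_zero (Finset.mem_univ k0) (le_antisymm hk0 (hp _))
        simp [hq0']
    rw [hre]
    calc ∑ τ : Fin t → Ω, ∑ ω : Ω, ((∏ k, p (τ k)) * p ω) *
            ((W ω *ᵥ traj W x0 t τ - cvec) ⬝ᵥ (W ω *ᵥ traj W x0 t τ - cvec))
        ≤ ∑ τ : Fin t → Ω, lambda2 A * ((∏ k, p (τ k)) *
            ((traj W x0 t τ - cvec) ⬝ᵥ (traj W x0 t τ - cvec))) :=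
          Finset.sum_le_sum fun τ _ => hstep τ
    _ = lambda2 A * ∑ τ : Fin t → Ω, (∏ k, p (τ k)) *
            ((traj W x0 t τ - cvec) ⬝ᵥ (traj W x0 t τ - cvec)) := by
          rw [Finset.mul_sum]
    _ ≤ lambda2 A * (lambda2 A ^ t * ((x0 - cvec) ⬝ᵥ (x0 - cvec))) :=
          mul_le_mul_of_nonneg_left ih hl2
    _ = lambda2 A ^ (t+1) * ((x0 - cvec) ⬝ᵥ (x0 - cvec)) := by ring
end

section
/- Let (W(t))_{t≥0} be i.i.d. random n×n matrices taking finitely many values, each almost surely symmetric, doubly stochastic, and a projection (W² = W), with λ₂(E[W(0)]) < 1, and define x(t+1) = W(t)x(t) for a deterministic x(0) ∈ ℝⁿ. Then x(t) converges to x_ave·1 in mean square: E[‖x(t) − x_ave·1‖²] → 0 as t → ∞. -/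
open Matrix

lemma count_gt {n : ℕ} {A : Matrix (Fin n) (Fin n) ℝ} (hA : A.IsHermitian) :
    (Finset.univ.filter (fun i => lambda2 A < hA.eigenvalues i)).card ≤ 1 := by
  classical
  rcases Nat.eq_zero_or_pos n with h0 | h0
  · subst h0; simp
  set l : List ℝ := ((Finset.univ.val.map hA.eigenvalues).sort (· ≤ ·)) with hl
  have hlen : l.length = n := by
    simp [hl, Multiset.length_sort]
  have hlam : lambda2 A = l.getD (n - 2) 0 := by
    rw [lambda2, dif_pos hA]
  have hn2 : n - 2 < l.length := by omega
  have hget : l.getD (n-2) 0 = l.get ⟨n-2, hn2⟩ := by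
    rw [List.getD_eq_getElem _ _ hn2]; simp
  -- card = countP on the multiset = countP on l
  have hcard : (Finset.univ.filter (fun i => lambda2 A < hA.eigenvalues i)).card
      = l.countP (fun x => decide (lambda2 A < x)) := by
    have hml : (l : Multiset ℝ) = Finset.univ.val.map hA.eigenvalues := by
      rw [hl]; exact Multiset.sort_eq _ _
    rw [← Multiset.coe_countP, hml, Multiset.countP_map]
    rfl
  rw [hcard]
  have hsplit : l = l.take (n-1) ++ l.drop (n-1) := (List.take_append_drop _ _).symm
  rw [hsplit, List.countP_append]
  have h1 : (l.take (n-1)).countP (fun x => decide (lambda2 A < x)) = 0 := by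
    rw [List.countP_eq_zero]
    intro a ha
    rcases List.mem_take_iff_getElem.mp ha with ⟨i, hi, rfl⟩
    simp only [decide_eq_true_eq, not_lt]
    have hi' : i < l.length := by omega
    have : l.get ⟨i, hi'⟩ ≤ l.get ⟨n-2, hn2⟩ := by
      apply (Multiset.pairwise_sort _ (· ≤ ·)).rel_get_of_le
      simp [Fin.le_def]; omega
    rw [hlam, hget]
    exact this
  have h2 : (l.drop (n-1)).countP (fun x => decide (lambda2 A < x)) ≤ (l.drop (n-1)).length :=
    List.countP_le_length
  rw [h1]
  simp only [List.length_drop, hlen] at h2 ⊢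
  omega


lemma quad_bound {n : ℕ} {A : Matrix (Fin n) (Fin n) ℝ} (hA : A.IsHermitian)
    (h1 : A *ᵥ (fun _ => (1:ℝ)) = fun _ => 1)
    (hl2 : lambda2 A < 1)
    (y : Fin n → ℝ) (hy : y ⬝ᵥ (fun _ => (1:ℝ)) = 0) :
    y ⬝ᵥ (A *ᵥ y) ≤ max (lambda2 A) 0 * (y ⬝ᵥ y) := by
  classical
  rcases Nat.eq_zero_or_pos n with h0 | h0
  · subst h0
    simp [dotProduct]
  set B := hA.eigenvectorBasis with hB
  have inner_dot : ∀ x z : EuclideanSpace ℝ (Fin n),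
      (inner ℝ x z : ℝ) = (x : Fin n → ℝ) ⬝ᵥ (z : Fin n → ℝ) := by
    intro x z
    simp [PiLp.inner_apply, dotProduct, RCLike.inner_apply, mul_comm]
  have hAsymm : Aᵀ = A := by
    have := hA.eq
    exact (Matrix.conjTranspose_eq_transpose_of_trivial A).symm.trans hA
  have repr_mulVec : ∀ (x : EuclideanSpace ℝ (Fin n)) (i : Fin n),
      B.repr (WithLp.toLp 2 (A *ᵥ x : Fin n → ℝ) : EuclideanSpace ℝ (Fin n)) i
        = hA.eigenvalues i * B.repr x i := by
    intro x i
    rw [B.repr_apply_apply, B.repr_apply_apply, inner_dot, inner_dot]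
    rw [Matrix.dotProduct_mulVec, ← Matrix.mulVec_transpose, hAsymm]
    have hmv : A *ᵥ B i = hA.eigenvalues i • (B i : Fin n → ℝ) :=
      hA.mulVec_eigenvectorBasis i
    rw [hmv]
    show (fun j => hA.eigenvalues i * B i j) ⬝ᵥ x = _
    simp [dotProduct, Finset.mul_sum, mul_assoc]
  have dot_repr : ∀ x z : EuclideanSpace ℝ (Fin n),
      (x : Fin n → ℝ) ⬝ᵥ (z : Fin n → ℝ) = ∑ i, B.repr x i * B.repr z i := by
    intro x z
    rw [← inner_dot, ← B.repr.inner_map_map x z, PiLp.inner_apply]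
    exact Finset.sum_congr rfl fun i _ => by simp [RCLike.inner_apply, mul_comm]
  set ones : EuclideanSpace ℝ (Fin n) := WithLp.toLp 2 (fun _ => (1:ℝ)) with hones
  set d : Fin n → ℝ := fun i => B.repr ones i with hd
  set c : Fin n → ℝ := fun i => B.repr (WithLp.toLp 2 y) i with hc
  have heigd : ∀ i, hA.eigenvalues i * d i = d i := by
    intro i
    rw [hd]
    calc hA.eigenvalues i * B.repr ones i
        = B.repr (WithLp.toLp 2 (A *ᵥ ones : Fin n → ℝ) : EuclideanSpace ℝ (Fin n)) i :=
          (repr_mulVec ones i).symm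
      _ = B.repr ones i := by rw [show (A *ᵥ (ones : Fin n → ℝ)) = (ones : Fin n → ℝ) from h1]
  have hone_ne : ones ≠ 0 := by
    intro h
    have : (ones : Fin n → ℝ) ⟨0, h0⟩ = 0 := by rw [h]; rfl
    simp [hones] at this
  obtain ⟨i₀, hi₀⟩ : ∃ i, d i ≠ 0 := by
    by_contra hcon
    push_neg at hcon
    apply hone_ne
    apply B.repr.injective
    ext i
    simpa using hcon i
  have heig_i₀ : hA.eigenvalues i₀ = 1 := by
    have h2 : (hA.eigenvalues i₀ - 1) * d i₀ = 0 := by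
      have := heigd i₀; ring_nf; linarith [heigd i₀]
    rcases mul_eq_zero.mp h2 with h | h
    · linarith
    · exact absurd h hi₀
  have hle : ∀ i, i ≠ i₀ → hA.eigenvalues i ≤ lambda2 A := by
    intro i hne
    by_contra hgt
    push_neg at hgt
    have h2 : ({i, i₀} : Finset (Fin n)) ⊆
        Finset.univ.filter (fun j => lambda2 A < hA.eigenvalues j) := by
      intro j hj
      simp only [Finset.mem_insert, Finset.mem_singleton] at hj
      rcases hj with rfl | rfl
      · simp [hgt]
      · simp [heig_i₀, hl2]
    have := Finset.card_le_card h2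
    rw [Finset.card_insert_of_notMem (by simpa using hne), Finset.card_singleton] at this
    have := le_trans this (count_gt hA)
    omega
  have hd0 : ∀ i, i ≠ i₀ → d i = 0 := by
    intro i hne
    by_contra hdne
    have h2 : (hA.eigenvalues i - 1) * d i = 0 := by
      ring_nf; linarith [heigd i]
    rcases mul_eq_zero.mp h2 with h | h
    · have := hle i hne
      linarith
    · exact absurd h hdne
  have hci₀ : c i₀ = 0 := by
    have h3 : (y : Fin n → ℝ) ⬝ᵥ (ones : Fin n → ℝ) = ∑ i, c i * d i := dot_repr (WithLp.toLp 2 y) ones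
    rw [hy] at h3
    have h4 : ∑ i, c i * d i = c i₀ * d i₀ := by
      apply Finset.sum_eq_single
      · intro b _ hb
        rw [hd0 b hb, mul_zero]
      · intro hb
        exact absurd (Finset.mem_univ i₀) hb
    rw [h4] at h3
    rcases mul_eq_zero.mp h3.symm with h | h
    · exact h
    · exact absurd h hi₀
  have key1 : y ⬝ᵥ (A *ᵥ y) = ∑ i, hA.eigenvalues i * (c i)^2 := by
    rw [show y ⬝ᵥ (A *ᵥ y) = _ from dot_repr (WithLp.toLp 2 y) (WithLp.toLp 2 (A *ᵥ y : Fin n → ℝ) : EuclideanSpace ℝ (Fin n))]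
    apply Finset.sum_congr rfl
    intro i _
    rw [show B.repr (WithLp.toLp 2 (A *ᵥ y)) i = hA.eigenvalues i * B.repr (WithLp.toLp 2 y) i from repr_mulVec (WithLp.toLp 2 y) i]
    ring
  have key2 : y ⬝ᵥ y = ∑ i, (c i)^2 := by
    rw [show y ⬝ᵥ y = _ from dot_repr (WithLp.toLp 2 y) (WithLp.toLp 2 y)]
    apply Finset.sum_congr rfl
    intro i _
    ring
  rw [key1, key2, Finset.mul_sum]
  apply Finset.sum_le_sum
  intro i _
  by_cases hii : i = i₀
  · subst hii
    rw [hci₀]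
    simp
  · have h5 := hle i hii
    have h6 : (0:ℝ) ≤ (c i)^2 := sq_nonneg _
    have h7 : hA.eigenvalues i ≤ max (lambda2 A) 0 := le_trans h5 (le_max_left _ _)
    exact mul_le_mul_of_nonneg_right h7 h6


lemma gossip_aux {n : ℕ} {Ω : Type*} [Fintype Ω]
    (p : Ω → ℝ) (hp : ∀ ω, 0 ≤ p ω) (hsum : ∑ ω, p ω = 1)
    (W : Ω → Matrix (Fin n) (Fin n) ℝ)
    (hsymm : ∀ ω, 0 < p ω → (W ω).IsSymm)
    (hrow : ∀ ω, 0 < p ω → ∀ i, ∑ j, W ω i j = 1)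
    (hcol : ∀ ω, 0 < p ω → ∀ j, ∑ i, W ω i j = 1)
    (hproj : ∀ ω, 0 < p ω → W ω * W ω = W ω)
    (hlam : lambda2 (∑ ω, p ω • W ω) < 1)
    (x0 : Fin n → ℝ) (a : ℝ)
    (hortho0 : (x0 - a • (fun _ => (1:ℝ))) ⬝ᵥ (fun _ => (1:ℝ)) = 0) :
    Filter.Tendsto
      (fun t : ℕ => ∑ σ : Fin t → Ω, (∏ k, p (σ k)) *
        ((traj W x0 t σ - a • fun _ => (1 : ℝ)) ⬝ᵥ
          (traj W x0 t σ - a • fun _ => (1 : ℝ))))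
      Filter.atTop (nhds 0) := by
  classical
  set ones : Fin n → ℝ := fun _ => 1 with hones
  set Abar : Matrix (Fin n) (Fin n) ℝ := ∑ ω, p ω • W ω with hAbar
  set z : (t : ℕ) → (Fin t → Ω) → Fin n → ℝ :=
    fun t σ => traj W x0 t σ - a • ones with hz
  set e : ℕ → ℝ :=
    fun t => ∑ σ : Fin t → Ω, (∏ k, p (σ k)) * (z t σ ⬝ᵥ z t σ) with he
  set cmax : ℝ := max (lambda2 Abar) 0 with hcmax
  have hc0 : 0 ≤ cmax := le_max_right _ _
  have hc1 : cmax < 1 := max_lt hlam one_pos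
  -- row fact
  have rowfact : ∀ ω, 0 < p ω → W ω *ᵥ ones = ones := by
    intro ω h
    funext i
    simp only [Matrix.mulVec, dotProduct, hones, mul_one]
    exact hrow ω h i
  have colfact : ∀ ω, 0 < p ω → ones ᵥ* W ω = ones := by
    intro ω h
    funext j
    simp only [Matrix.vecMul, dotProduct, hones, one_mul]
    exact hcol ω h j
  have horthW : ∀ ω, 0 < p ω → ∀ v : Fin n → ℝ, v ⬝ᵥ ones = 0 →
      (W ω *ᵥ v) ⬝ᵥ ones = 0 := by
    intro ω h v hv
    rw [dotProduct_comm, Matrix.dotProduct_mulVec, colfact ω h, dotProduct_comm]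
    exact hv
  have projfact : ∀ ω, 0 < p ω → ∀ v : Fin n → ℝ,
      (W ω *ᵥ v) ⬝ᵥ (W ω *ᵥ v) = v ⬝ᵥ (W ω *ᵥ v) := by
    intro ω h v
    conv_lhs => rw [Matrix.dotProduct_mulVec]
    rw [← Matrix.mulVec_transpose, (hsymm ω h).eq, Matrix.mulVec_mulVec, hproj ω h]
    exact dotProduct_comm _ _
  have hherm : Abar.IsHermitian := by
    have htr : Abarᵀ = Abar := by
      rw [hAbar, Matrix.transpose_sum]
      refine Finset.sum_congr rfl fun ω _ => ?_
      rw [Matrix.transpose_smul]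
      rcases (hp ω).eq_or_lt with h | h
      · rw [← h]; simp
      · rw [(hsymm ω h).eq]
    rw [Matrix.IsHermitian, Matrix.conjTranspose_eq_transpose_of_trivial]
    exact htr
  have hmv_sum : ∀ v : Fin n → ℝ, Abar *ᵥ v = ∑ ω, p ω • (W ω *ᵥ v) := by
    intro v
    funext i
    simp only [hAbar, Matrix.mulVec, dotProduct, Matrix.sum_apply, Matrix.smul_apply,
      smul_eq_mul, Finset.sum_apply, Pi.smul_apply, Finset.sum_mul, Finset.mul_sum, mul_assoc]
    rw [Finset.sum_comm]
  have hdot_sum : ∀ (v : Fin n → ℝ) (f : Ω → Fin n → ℝ),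
      v ⬝ᵥ (∑ ω, f ω) = ∑ ω, v ⬝ᵥ f ω := by
    intro v f
    simp only [dotProduct, Finset.sum_apply, Finset.mul_sum]
    rw [Finset.sum_comm]
  have hAones : Abar *ᵥ ones = ones := by
    rw [hmv_sum]
    have : ∀ ω ∈ Finset.univ, p ω • (W ω *ᵥ ones) = p ω • ones := by
      intro ω _
      rcases (hp ω).eq_or_lt with h | h
      · rw [← h]; simp
      · rw [rowfact ω h]
    rw [Finset.sum_congr rfl this, ← Finset.sum_smul, hsum, one_smul]
  have hquad : ∀ v : Fin n → ℝ, v ⬝ᵥ ones = 0 →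
      v ⬝ᵥ (Abar *ᵥ v) ≤ cmax * (v ⬝ᵥ v) :=
    fun v hv => quad_bound hherm hAones hlam v hv
  -- step for z
  have zstep : ∀ t (σ : Fin (t+1) → Ω), 0 < p (σ (Fin.last t)) →
      z (t+1) σ = W (σ (Fin.last t)) *ᵥ z t (fun k => σ k.castSucc) := by
    intro t σ hpos
    show traj W x0 (t+1) σ - a • ones = _
    rw [show traj W x0 (t+1) σ
        = W (σ (Fin.last t)) *ᵥ traj W x0 t (fun k => σ k.castSucc) from rfl]
    rw [Matrix.mulVec_sub, Matrix.mulVec_smul, rowfact _ hpos]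
  have horth : ∀ t (σ : Fin t → Ω), (∀ k, 0 < p (σ k)) → z t σ ⬝ᵥ ones = 0 := by
    intro t
    induction t with
    | zero => intro σ _; exact hortho0
    | succ t ih =>
      intro σ hσ
      rw [zstep t σ (hσ _)]
      exact horthW _ (hσ _) _ (ih _ fun k => hσ _)
  have enonneg : ∀ t, 0 ≤ e t := by
    intro t
    apply Finset.sum_nonneg
    intro σ _
    apply mul_nonneg (Finset.prod_nonneg fun k _ => hp _)
    exact Finset.sum_nonneg fun i _ => mul_self_nonneg _
  have estep : ∀ t, e (t+1) ≤ cmax * e t := by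
    intro t
    have hre : e (t+1) = ∑ q : Ω × (Fin t → Ω),
        (∏ k, p ((Fin.snoc q.2 q.1 : Fin (t+1) → Ω) k)) *
          (z (t+1) (Fin.snoc q.2 q.1 : Fin (t+1) → Ω) ⬝ᵥ z (t+1) (Fin.snoc q.2 q.1 : Fin (t+1) → Ω)) := by
      rw [he]
      exact (Fintype.sum_equiv (Fin.snocEquiv (fun _ => Ω)) _ _ (fun q => rfl)).symm
    rw [hre, Fintype.sum_prod_type, Finset.sum_comm]
    have key : ∀ σ' : Fin t → Ω,
        (∑ ω, (∏ k, p ((Fin.snoc σ' ω : Fin (t+1) → Ω) k)) *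
          (z (t+1) (Fin.snoc σ' ω : Fin (t+1) → Ω) ⬝ᵥ z (t+1) (Fin.snoc σ' ω : Fin (t+1) → Ω)))
        ≤ cmax * ((∏ k, p (σ' k)) * (z t σ' ⬝ᵥ z t σ')) := by
      intro σ'
      have hprod : ∀ ω : Ω, (∏ k, p ((Fin.snoc σ' ω : Fin (t+1) → Ω) k)) = (∏ k, p (σ' k)) * p ω := by
        intro ω
        rw [show (fun k => p ((Fin.snoc σ' ω : Fin (t+1) → Ω) k))
            = (Fin.snoc (fun j => p (σ' j)) (p ω) : Fin (t+1) → ℝ) from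
          funext fun k => Fin.lastCases (by simp) (fun j => by simp) k]
        exact Fin.prod_snoc _ _
      by_cases hall : ∀ k, 0 < p (σ' k)
      · set v : Fin n → ℝ := z t σ' with hv
        have hterm : ∀ ω : Ω, (∏ k, p ((Fin.snoc σ' ω : Fin (t+1) → Ω) k)) *
            (z (t+1) (Fin.snoc σ' ω : Fin (t+1) → Ω) ⬝ᵥ z (t+1) (Fin.snoc σ' ω : Fin (t+1) → Ω))
            = (∏ k, p (σ' k)) * (v ⬝ᵥ (p ω • (W ω *ᵥ v))) := by
          intro ω
          rw [hprod ω, dotProduct_smul, smul_eq_mul]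
          rcases (hp ω).eq_or_lt with h | h
          · rw [← h]; ring
          · have hlast : (Fin.snoc σ' ω : Fin (t+1) → Ω) (Fin.last t) = ω := Fin.snoc_last _ _
            have hcast : (fun k : Fin t => (Fin.snoc σ' ω : Fin (t+1) → Ω) k.castSucc) = σ' :=
              funext fun k => Fin.snoc_castSucc _ _ _
            have hz1 : z (t+1) (Fin.snoc σ' ω : Fin (t+1) → Ω) = W ω *ᵥ v := by
              rw [zstep t _ (by rw [hlast]; exact h), hlast, hcast]
            rw [hz1, projfact ω h v]
            ring
        rw [Finset.sum_congr rfl (fun ω _ => hterm ω), ← Finset.mul_sum, ← hdot_sum, ← hmv_sum]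
        have hq := hquad v (horth t σ' hall)
        have hpn : 0 ≤ ∏ k, p (σ' k) := Finset.prod_nonneg fun k _ => hp _
        calc (∏ k, p (σ' k)) * (v ⬝ᵥ (Abar *ᵥ v))
            ≤ (∏ k, p (σ' k)) * (cmax * (v ⬝ᵥ v)) := mul_le_mul_of_nonneg_left hq hpn
          _ = cmax * ((∏ k, p (σ' k)) * (v ⬝ᵥ v)) := by ring
      · push_neg at hall
        obtain ⟨k0, hk0⟩ := hall
        have hzero : (∏ k, p (σ' k)) = 0 :=
          Finset.prod_eq_zero (Finset.mem_univ k0) (le_antisymm hk0 (hp _))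
        have : ∀ ω : Ω, (∏ k, p ((Fin.snoc σ' ω : Fin (t+1) → Ω) k)) *
            (z (t+1) (Fin.snoc σ' ω : Fin (t+1) → Ω) ⬝ᵥ z (t+1) (Fin.snoc σ' ω : Fin (t+1) → Ω)) = 0 := by
          intro ω
          rw [hprod ω, hzero, zero_mul, zero_mul]
        rw [Finset.sum_congr rfl (fun ω _ => this ω), Finset.sum_const, smul_zero,
          hzero, zero_mul, mul_zero]
    calc ∑ σ' : Fin t → Ω, ∑ ω, (∏ k, p ((Fin.snoc σ' ω : Fin (t+1) → Ω) k)) *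
          (z (t+1) (Fin.snoc σ' ω : Fin (t+1) → Ω) ⬝ᵥ z (t+1) (Fin.snoc σ' ω : Fin (t+1) → Ω))
        ≤ ∑ σ' : Fin t → Ω, cmax * ((∏ k, p (σ' k)) * (z t σ' ⬝ᵥ z t σ')) :=
          Finset.sum_le_sum fun σ' _ => key σ'
      _ = cmax * e t := by rw [he, Finset.mul_sum]
  have ebound : ∀ t, e t ≤ cmax ^ t * e 0 := by
    intro t
    induction t with
    | zero => simp
    | succ t ih =>
      calc e (t+1) ≤ cmax * e t := estep t
        _ ≤ cmax * (cmax ^ t * e 0) := mul_le_mul_of_nonneg_left ih hc0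
        _ = cmax ^ (t+1) * e 0 := by ring
  have hlim : Filter.Tendsto (fun t : ℕ => cmax ^ t * e 0) Filter.atTop (nhds 0) := by
    have := (tendsto_pow_atTop_nhds_zero_of_lt_one hc0 hc1).mul_const (e 0)
    simpa using this
  exact squeeze_zero enonneg ebound hlim


/-- Let `(W(t))` be i.i.d. random `n × n` matrices taking finitely many values
(common law `p` on a finite set of outcomes `Ω`), each almost surely symmetric,
doubly stochastic, and a projection, with `λ₂(E[W(0)]) < 1`, and let
`x(t+1) = W(t) x(t)` from a deterministic `x(0)`.  Then `x(t)` converges to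
`x_ave·1` in mean square: `E[‖x(t) − x_ave·1‖²] → 0` as `t → ∞`
(Euclidean norms written via the dot product). -/
theorem gossip_converges_in_mean_square {n : ℕ} {Ω : Type*} [Fintype Ω]
    (p : Ω → ℝ) (hp : ∀ ω, 0 ≤ p ω) (hsum : ∑ ω, p ω = 1)
    (W : Ω → Matrix (Fin n) (Fin n) ℝ)
    (hsymm : ∀ ω, 0 < p ω → (W ω).IsSymm)
    (hnonneg : ∀ ω, 0 < p ω → ∀ i j, 0 ≤ W ω i j)
    (hrow : ∀ ω, 0 < p ω → ∀ i, ∑ j, W ω i j = 1)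
    (hcol : ∀ ω, 0 < p ω → ∀ j, ∑ i, W ω i j = 1)
    (hproj : ∀ ω, 0 < p ω → W ω * W ω = W ω)
    (hlam : lambda2 (∑ ω, p ω • W ω) < 1)
    (x0 : Fin n → ℝ) :
    Filter.Tendsto
      (fun t : ℕ => ∑ σ : Fin t → Ω, (∏ k, p (σ k)) *
        ((traj W x0 t σ - ((∑ i, x0 i) / n) • fun _ => (1 : ℝ)) ⬝ᵥ
          (traj W x0 t σ - ((∑ i, x0 i) / n) • fun _ => (1 : ℝ))))
      Filter.atTop (nhds 0) := by
  apply gossip_aux p hp hsum W hsymm hrow hcol hproj hlam x0 ((∑ i, x0 i) / n)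
  rcases Nat.eq_zero_or_pos n with h0 | h0
  · subst h0; simp [dotProduct]
  · have hn : (n:ℝ) ≠ 0 := Nat.cast_ne_zero.mpr h0.ne'
    simp only [dotProduct, Pi.sub_apply, Pi.smul_apply, smul_eq_mul, mul_one,
      Finset.sum_sub_distrib, Finset.sum_const, Finset.card_univ, Fintype.card_fin,
      nsmul_eq_mul]
    field_simp
    ring
end

section
/- Consider uniform pairwise gossip on the complete graph on n ≥ 2 nodes: (W(t))_{t≥0} are i.i.d., each uniformly distributed over the n(n−1)/2 pairwise averaging matrices W_{ij} = I − (1/2)(e_i − e_j)(e_i − e_j)ᵀ, and x(t+1) = W(t)x(t) for a deterministic nonzero x(0) ∈ ℝⁿ. Then for every ε ∈ (0,1) and every integer t ≥ 3(n−1)·log(1/ε), one has P( ‖x(t) − x_ave·1‖ / ‖x(0)‖ ≥ ε ) ≤ ε; that is, the ε-averaging time of uniform pairwise gossip on the complete graph is O(n log(1/ε)). -/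
open Matrix

/-- The pairwise averaging matrix `W_{ij} = I − (1/2)(e_i − e_j)(e_i − e_j)ᵀ`,
which replaces `x_i` and `x_j` by their average and fixes all other coordinates. -/
noncomputable def pairAvgMatrix {n : ℕ} (i j : Fin n) : Matrix (Fin n) (Fin n) ℝ :=
  1 - (2 : ℝ)⁻¹ •
    Matrix.vecMulVec (Pi.single i 1 - Pi.single j 1) (Pi.single i 1 - Pi.single j 1)

lemma vecMulVec_mulVec' {m : Type*} [Fintype m] (w v x : m → ℝ) :
    Matrix.vecMulVec w v *ᵥ x = (v ⬝ᵥ x) • w := by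
  funext k
  simp only [Matrix.mulVec, Matrix.vecMulVec_apply, dotProduct, Pi.smul_apply,
    smul_eq_mul, Finset.sum_mul]
  exact Finset.sum_congr rfl fun a _ => by ring

lemma pair_mulVec {n : ℕ} (i j : Fin n) (y : Fin n → ℝ) :
    pairAvgMatrix i j *ᵥ y =
      y - ((y i - y j) / 2) • (Pi.single i 1 - Pi.single j 1) := by
  unfold pairAvgMatrix
  rw [Matrix.sub_mulVec, Matrix.one_mulVec, Matrix.smul_mulVec, vecMulVec_mulVec']
  rw [sub_dotProduct, single_dotProduct, single_dotProduct]
  rw [smul_smul]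
  congr 1
  ring_nf

lemma single_sub_dot {n : ℕ} (i j : Fin n) (y : Fin n → ℝ) :
    (Pi.single i 1 - Pi.single j 1) ⬝ᵥ y = y i - y j := by
  rw [sub_dotProduct, single_dotProduct, single_dotProduct]
  ring

lemma single_sub_dot_self {n : ℕ} {i j : Fin n} (hij : i ≠ j) :
    (Pi.single i 1 - Pi.single j 1 : Fin n → ℝ) ⬝ᵥ (Pi.single i 1 - Pi.single j 1) = 2 := by
  rw [single_sub_dot]
  simp [Pi.single_eq_of_ne hij, Pi.single_eq_of_ne hij.symm]
  norm_num

lemma pair_dot {n : ℕ} {i j : Fin n} (hij : i ≠ j) (y : Fin n → ℝ) :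
    (pairAvgMatrix i j *ᵥ y) ⬝ᵥ (pairAvgMatrix i j *ᵥ y) = y ⬝ᵥ y - (y i - y j) ^ 2 / 2 := by
  rw [pair_mulVec]
  set v : Fin n → ℝ := Pi.single i 1 - Pi.single j 1 with hv
  set a : ℝ := (y i - y j) / 2 with ha
  have h1 : v ⬝ᵥ y = y i - y j := single_sub_dot i j y
  have h2 : y ⬝ᵥ v = y i - y j := by rw [dotProduct_comm]; exact h1
  have h3 : v ⬝ᵥ v = 2 := single_sub_dot_self hij
  rw [sub_dotProduct, dotProduct_sub, dotProduct_sub,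
    smul_dotProduct, smul_dotProduct, dotProduct_smul,
    dotProduct_smul, h1, h2, h3]
  simp only [smul_eq_mul, ha]
  ring

lemma pair_sum {n : ℕ} {i j : Fin n} (hij : i ≠ j) (y : Fin n → ℝ) :
    ∑ k, (pairAvgMatrix i j *ᵥ y) k = ∑ k, y k := by
  rw [pair_mulVec]
  simp only [Pi.sub_apply, Pi.smul_apply, smul_eq_mul, Finset.sum_sub_distrib]
  rw [← Finset.mul_sum]
  have : ∑ k, ((Pi.single i 1 : Fin n → ℝ) k - (Pi.single j 1 : Fin n → ℝ) k) = 0 := by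
    simp [Finset.sum_sub_distrib]
  rw [this, mul_zero, sub_zero]

lemma pair_ones {n : ℕ} (i j : Fin n) :
    pairAvgMatrix i j *ᵥ (fun _ => (1:ℝ)) = fun _ => (1:ℝ) := by
  rw [pair_mulVec]
  simp

def pairSigmaEquiv (n : ℕ) : {q : Fin n × Fin n // q.1 < q.2} ≃ (Σ j : Fin n, Fin j.val) where
  toFun q := ⟨q.1.2, ⟨q.1.1.val, q.2⟩⟩
  invFun s := ⟨(⟨s.2.val, s.2.isLt.trans s.1.isLt⟩, s.1), s.2.isLt⟩
  left_inv q := rfl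
  right_inv s := rfl

lemma card_pairs_mul_two (n : ℕ) :
    Fintype.card {q : Fin n × Fin n // q.1 < q.2} * 2 = n * (n - 1) := by
  rw [Fintype.card_congr (pairSigmaEquiv n), Fintype.card_sigma]
  simp only [Fintype.card_fin]
  rw [Fin.sum_univ_eq_sum_range (fun i => i) n]
  exact Finset.sum_range_id_mul_two n

lemma sum_sq_pairs {n : ℕ} (y : Fin n → ℝ) (hy : ∑ i, y i = 0) :
    ∑ q : {q : Fin n × Fin n // q.1 < q.2}, (y q.1.1 - y q.1.2) ^ 2
      = n * (y ⬝ᵥ y) := by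
  classical
  set f : Fin n × Fin n → ℝ := fun p => (y p.1 - y p.2) ^ 2 with hf
  have hdot : y ⬝ᵥ y = ∑ i, y i ^ 2 := by
    simp [dotProduct, sq]
  have hfull : ∑ p : Fin n × Fin n, f p = 2 * n * (y ⬝ᵥ y) := by
    rw [Fintype.sum_prod_type]
    have hrow : ∀ i, ∑ j, f (i, j) = n * y i ^ 2 + ∑ j, y j ^ 2 := by
      intro i
      have he : ∀ j, f (i, j) = y i ^ 2 - 2 * y i * y j + y j ^ 2 := fun j => by
        simp only [hf]; ring
      simp_rw [he]
      rw [Finset.sum_add_distrib, Finset.sum_sub_distrib, ← Finset.mul_sum, hy,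
        Finset.sum_const, Finset.card_univ, Fintype.card_fin]
      simp [nsmul_eq_mul]
    simp_rw [hrow]
    rw [Finset.sum_add_distrib, ← Finset.mul_sum, Finset.sum_const, Finset.card_univ,
      Fintype.card_fin, hdot]
    simp [nsmul_eq_mul]
    ring
  have hsub : ∑ q : {q : Fin n × Fin n // q.1 < q.2}, f q.1
      = ∑ p ∈ Finset.univ.filter (fun p : Fin n × Fin n => p.1 < p.2), f p := by
    exact (Finset.sum_subtype (Finset.univ.filter (fun p : Fin n × Fin n => p.1 < p.2))
      (fun p => by simp) f).symm
  have hswap : ∑ p ∈ Finset.univ.filter (fun p : Fin n × Fin n => p.2 < p.1), f p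
      = ∑ p ∈ Finset.univ.filter (fun p : Fin n × Fin n => p.1 < p.2), f p := by
    refine Finset.sum_nbij' Prod.swap Prod.swap ?_ ?_ ?_ ?_ ?_
    · intro a ha; simp only [Finset.mem_filter, Finset.mem_univ, true_and] at ha ⊢; exact ha
    · intro a ha; simp only [Finset.mem_filter, Finset.mem_univ, true_and] at ha ⊢; exact ha
    · intro a _; rfl
    · intro a _; rfl
    · intro a _; simp only [hf, Prod.fst_swap, Prod.snd_swap]; ring
  have hnotlt : ∑ p ∈ Finset.univ.filter (fun p : Fin n × Fin n => ¬ p.1 < p.2), f p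
      = ∑ p ∈ Finset.univ.filter (fun p : Fin n × Fin n => p.2 < p.1), f p := by
    symm
    refine Finset.sum_subset ?_ ?_
    · intro p hp
      simp only [Finset.mem_filter, Finset.mem_univ, true_and] at hp ⊢
      exact lt_asymm hp
    · intro p hp hp2
      simp only [Finset.mem_filter, Finset.mem_univ, true_and] at hp hp2
      have : p.1 = p.2 := le_antisymm (not_lt.mp hp2) (not_lt.mp hp)
      simp [hf, this]
  have hsplit := Finset.sum_filter_add_sum_filter_not Finset.univ
    (fun p : Fin n × Fin n => p.1 < p.2) f
  have h2 : 2 * ∑ q : {q : Fin n × Fin n // q.1 < q.2}, f q.1 = 2 * n * (y ⬝ᵥ y) := by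
    rw [← hfull, ← hsplit, hsub, hnotlt, hswap]; ring
  have := congrArg (· / 2) h2
  linarith

lemma traj_succ {n t : ℕ} {Ω : Type*} (W : Ω → Matrix (Fin n) (Fin n) ℝ)
    (x0 : Fin n → ℝ) (σ : Fin (t+1) → Ω) :
    traj W x0 (t+1) σ = W (σ (Fin.last t)) *ᵥ traj W x0 t (fun k => σ k.castSucc) := rfl

section main
variable {n : ℕ}

noncomputable abbrev Wfam : {q : Fin n × Fin n // q.1 < q.2} → Matrix (Fin n) (Fin n) ℝ :=
  fun q => pairAvgMatrix q.1.1 q.1.2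

lemma step_sum (y : Fin n → ℝ) (hy : ∑ i, y i = 0) :
    ∑ q : {q : Fin n × Fin n // q.1 < q.2}, (Wfam q *ᵥ y) ⬝ᵥ (Wfam q *ᵥ y)
      = ((Fintype.card {q : Fin n × Fin n // q.1 < q.2} : ℝ) - n / 2) * (y ⬝ᵥ y) := by
  have he : ∀ q : {q : Fin n × Fin n // q.1 < q.2}, (Wfam q *ᵥ y) ⬝ᵥ (Wfam q *ᵥ y)
      = y ⬝ᵥ y - (y q.1.1 - y q.1.2) ^ 2 / 2 := fun q =>
    pair_dot (ne_of_lt q.2) y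
  simp_rw [he]
  rw [Finset.sum_sub_distrib, Finset.sum_const, Finset.card_univ, ← Finset.sum_div,
    sum_sq_pairs y hy]
  simp [nsmul_eq_mul]
  ring

lemma traj_sum (y0 : Fin n → ℝ) (hy0 : ∑ i, y0 i = 0) :
    ∀ t (σ : Fin t → {q : Fin n × Fin n // q.1 < q.2}), ∑ i, traj Wfam y0 t σ i = 0
  | 0, _ => hy0
  | t + 1, σ => by
    show ∑ i, (Wfam (σ (Fin.last t)) *ᵥ traj Wfam y0 t (fun k => σ k.castSucc)) i = 0
    rw [pair_sum (ne_of_lt (σ (Fin.last t)).2)]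
    exact traj_sum y0 hy0 t _

set_option maxHeartbeats 1000000 in
lemma traj_expect (y0 : Fin n → ℝ) (hy0 : ∑ i, y0 i = 0) :
    ∀ t, ∑ σ : Fin t → {q : Fin n × Fin n // q.1 < q.2}, (traj Wfam y0 t σ ⬝ᵥ traj Wfam y0 t σ)
      = ((Fintype.card {q : Fin n × Fin n // q.1 < q.2} : ℝ) - n / 2) ^ t * (y0 ⬝ᵥ y0)
  | 0 => by simp [traj]
  | t + 1 => by
    have he := Equiv.sum_comp (Fin.snocEquiv (fun _ : Fin (t+1) => {q : Fin n × Fin n // q.1 < q.2}))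
      (fun σ => traj Wfam y0 (t+1) σ ⬝ᵥ traj Wfam y0 (t+1) σ)
    rw [← he, Fintype.sum_prod_type]
    have hterm : ∀ (q : {q : Fin n × Fin n // q.1 < q.2}) (σ' : Fin t → {q : Fin n × Fin n // q.1 < q.2}),
        traj Wfam y0 (t+1) (Fin.snocEquiv (fun _ : Fin (t+1) => {q : Fin n × Fin n // q.1 < q.2}) (q, σ'))
          = Wfam q *ᵥ traj Wfam y0 t σ' := by
      intro q σ'
      rw [traj_succ]
      simp only [Fin.snocEquiv_apply, Fin.snoc_last]
      congr 1
      funext k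
      simp
    have : ∀ q : {q : Fin n × Fin n // q.1 < q.2}, ∑ σ' : Fin t → {q : Fin n × Fin n // q.1 < q.2},
        (traj Wfam y0 (t+1) (Fin.snocEquiv (fun _ : Fin (t+1) => {q : Fin n × Fin n // q.1 < q.2}) (q, σ')) ⬝ᵥ
          traj Wfam y0 (t+1) (Fin.snocEquiv (fun _ : Fin (t+1) => {q : Fin n × Fin n // q.1 < q.2}) (q, σ')))
        = ∑ σ' : Fin t → {q : Fin n × Fin n // q.1 < q.2}, (Wfam q *ᵥ traj Wfam y0 t σ') ⬝ᵥ (Wfam q *ᵥ traj Wfam y0 t σ') := by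
      intro q
      exact Finset.sum_congr rfl fun σ' _ => by rw [hterm q σ']
    simp_rw [this]
    rw [Finset.sum_comm]
    have hstep : ∀ σ' : Fin t → {q : Fin n × Fin n // q.1 < q.2},
        ∑ q : {q : Fin n × Fin n // q.1 < q.2}, (Wfam q *ᵥ traj Wfam y0 t σ') ⬝ᵥ (Wfam q *ᵥ traj Wfam y0 t σ')
        = ((Fintype.card {q : Fin n × Fin n // q.1 < q.2} : ℝ) - n / 2) * (traj Wfam y0 t σ' ⬝ᵥ traj Wfam y0 t σ') :=
      fun σ' => step_sum _ (traj_sum y0 hy0 t σ')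
    simp_rw [hstep]
    rw [← Finset.mul_sum, traj_expect y0 hy0 t]
    ring


lemma traj_shift (x0 : Fin n → ℝ) (c : ℝ) :
    ∀ t (σ : Fin t → {q : Fin n × Fin n // q.1 < q.2}),
      traj Wfam x0 t σ - c • (fun _ => (1:ℝ))
        = traj Wfam (x0 - c • (fun _ => (1:ℝ))) t σ
  | 0, _ => rfl
  | t+1, σ => by
    rw [traj_succ, traj_succ, ← traj_shift x0 c t, Matrix.mulVec_sub]
    congr 1
    rw [Matrix.mulVec_smul, pair_ones]

lemma dot_self_nonneg (v : Fin n → ℝ) : 0 ≤ v ⬝ᵥ v :=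
  Finset.sum_nonneg fun i _ => mul_self_nonneg (v i)

lemma dot_shift_le (x0 : Fin n → ℝ) (c : ℝ)
    (h : ∑ i, ((x0 - c • (fun _ => (1:ℝ))) : Fin n → ℝ) i = 0) :
    (x0 - c • (fun _ => (1:ℝ))) ⬝ᵥ (x0 - c • (fun _ => (1:ℝ))) ≤ x0 ⬝ᵥ x0 := by
  set y0 : Fin n → ℝ := x0 - c • (fun _ => (1:ℝ)) with hy0
  have hx0 : x0 = y0 + c • (fun _ => (1:ℝ)) := by rw [hy0]; ring_nf
  have hw : (fun _ => (1:ℝ)) ⬝ᵥ (fun _ : Fin n => (1:ℝ)) = n := by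
    simp [dotProduct]
  have hyw : y0 ⬝ᵥ (fun _ : Fin n => (1:ℝ)) = 0 := by
    simpa [dotProduct] using h
  have hwy : (fun _ : Fin n => (1:ℝ)) ⬝ᵥ y0 = 0 := by
    rw [dotProduct_comm]; exact hyw
  have hexp : x0 ⬝ᵥ x0 = y0 ⬝ᵥ y0 + c ^ 2 * n := by
    rw [hx0, add_dotProduct, dotProduct_add, dotProduct_add,
      smul_dotProduct, smul_dotProduct, dotProduct_smul,
      dotProduct_smul, hw, hyw, hwy]
    simp only [smul_eq_mul]
    ring
  nlinarith [sq_nonneg c, Nat.cast_nonneg (α := ℝ) n, mul_nonneg (sq_nonneg c) (Nat.cast_nonneg (α := ℝ) n)]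

end main

set_option maxHeartbeats 2000000

/-- Uniform pairwise gossip on the complete graph on `n ≥ 2` nodes: the `W(t)` are
i.i.d., uniform over the `n(n−1)/2` pairwise averaging matrices `W_{ij}` (`i < j`,
each outcome having probability `1/card`), and `x(t+1) = W(t) x(t)` from a nonzero
deterministic `x(0)`.  Then for every `ε ∈ (0,1)` and every `t ≥ 3(n−1) log(1/ε)`,
`P(‖x(t) − x_ave·1‖ / ‖x(0)‖ ≥ ε) ≤ ε`; i.e. the ε-averaging time is
`O(n log(1/ε))`. -/
theorem averaging_time_complete_graph {n : ℕ} (hn : 2 ≤ n)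
    (x0 : Fin n → ℝ) (hx0 : x0 ≠ 0)
    (ε : ℝ) (hε0 : 0 < ε) (hε1 : ε < 1)
    (t : ℕ) (ht : 3 * ((n : ℝ) - 1) * Real.log (1 / ε) ≤ t) :
    ∑ σ : Fin t → {q : Fin n × Fin n // q.1 < q.2},
      (if ε ≤
          Real.sqrt
            ((traj (fun q : {q : Fin n × Fin n // q.1 < q.2} =>
                  pairAvgMatrix q.1.1 q.1.2) x0 t σ
                - ((∑ i, x0 i) / n) • fun _ => (1 : ℝ)) ⬝ᵥ
              (traj (fun q : {q : Fin n × Fin n // q.1 < q.2} =>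
                  pairAvgMatrix q.1.1 q.1.2) x0 t σ
                - ((∑ i, x0 i) / n) • fun _ => (1 : ℝ))) /
            Real.sqrt (x0 ⬝ᵥ x0)
        then ∏ _k : Fin t, ((Fintype.card {q : Fin n × Fin n // q.1 < q.2} : ℝ))⁻¹
        else 0) ≤ ε := by
  classical
  have hn2 : (2:ℝ) ≤ (n:ℝ) := by exact_mod_cast hn
  have hn1 : (0:ℝ) < (n:ℝ) - 1 := by linarith
  have hnpos : (0:ℝ) < (n:ℝ) := by linarith
  set C : ℕ := Fintype.card {q : Fin n × Fin n // q.1 < q.2} with hCdef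
  have hC2 : (C:ℝ) * 2 = (n:ℝ) * ((n:ℝ) - 1) := by
    have h := congrArg (Nat.cast : ℕ → ℝ) (card_pairs_mul_two n)
    have h1 : (1:ℕ) ≤ n := by omega
    push_cast [Nat.cast_sub h1] at h
    exact h
  have hCpos : (0:ℝ) < (C:ℝ) := by nlinarith
  set c : ℝ := (∑ i, x0 i) / (n:ℝ) with hc
  set y0 : Fin n → ℝ := x0 - c • (fun _ => (1:ℝ)) with hy0def
  have hy0sum : ∑ i, y0 i = 0 := by
    rw [hy0def]
    simp only [Pi.sub_apply, Pi.smul_apply, smul_eq_mul, mul_one, Finset.sum_sub_distrib,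
      Finset.sum_const, Finset.card_univ, Fintype.card_fin, nsmul_eq_mul, hc]
    field_simp
    ring
  have hX : 0 < x0 ⬝ᵥ x0 := by
    rcases lt_or_eq_of_le (dot_self_nonneg x0) with h | h
    · exact h
    · exact absurd (dotProduct_self_eq_zero.mp h.symm) hx0
  have hshift : ∀ σ : Fin t → {q : Fin n × Fin n // q.1 < q.2},
      (traj (fun q : {q : Fin n × Fin n // q.1 < q.2} =>
          pairAvgMatrix q.1.1 q.1.2) x0 t σ - c • fun _ => (1 : ℝ))
        = traj (fun q : {q : Fin n × Fin n // q.1 < q.2} =>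
            pairAvgMatrix q.1.1 q.1.2) y0 t σ := by
    intro σ
    rw [hy0def]
    exact traj_shift x0 c t σ
  have hexpect : ∑ σ : Fin t → {q : Fin n × Fin n // q.1 < q.2},
      (traj (fun q : {q : Fin n × Fin n // q.1 < q.2} =>
          pairAvgMatrix q.1.1 q.1.2) y0 t σ ⬝ᵥ
        traj (fun q : {q : Fin n × Fin n // q.1 < q.2} =>
          pairAvgMatrix q.1.1 q.1.2) y0 t σ)
      = ((C:ℝ) - (n:ℝ) / 2) ^ t * (y0 ⬝ᵥ y0) := traj_expect y0 hy0sum t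
  have hprod : (∏ _k : Fin t, ((C : ℝ))⁻¹) = ((C:ℝ)⁻¹) ^ t := by
    simp [Finset.prod_const]
  have hy0le : y0 ⬝ᵥ y0 ≤ x0 ⬝ᵥ x0 := by
    rw [hy0def]
    refine dot_shift_le x0 c ?_
    rw [← hy0def]
    exact hy0sum
  have hεX : 0 < ε ^ 2 * (x0 ⬝ᵥ x0) := by positivity
  set L : ℝ := ((n:ℝ) - 2) / ((n:ℝ) - 1) with hLdef
  have hCL : (C:ℝ) - (n:ℝ)/2 = L * C := by
    have hC : (C:ℝ) = (n:ℝ) * ((n:ℝ) - 1) / 2 := by linarith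
    rw [hC, hLdef]
    field_simp
    ring
  have hL0 : 0 ≤ L := div_nonneg (by linarith) (by linarith)
  have hLpow : ((C:ℝ)⁻¹) ^ t * ((C:ℝ) - (n:ℝ)/2) ^ t = L ^ t := by
    rw [hCL, ← mul_pow]
    congr 1
    field_simp
  have hLexp : L ≤ Real.exp (-(1/((n:ℝ)-1))) := by
    have hLe : L = -(1/((n:ℝ)-1)) + 1 := by
      rw [hLdef]
      field_simp
      ring
    rw [hLe]
    exact Real.add_one_le_exp _
  have hlog : 0 < Real.log (1/ε) := by
    apply Real.log_pos
    rw [lt_div_iff₀ hε0]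
    linarith
  have ht' : 3 * Real.log (1/ε) ≤ (t:ℝ)/((n:ℝ)-1) := by
    rw [le_div_iff₀ hn1]
    nlinarith
  have hLt : L ^ t ≤ ε ^ 3 :=
    calc L ^ t ≤ Real.exp (-(1/((n:ℝ)-1))) ^ t := pow_le_pow_left₀ hL0 hLexp t
      _ = Real.exp (-((t:ℝ)/((n:ℝ)-1))) := by
          rw [← Real.exp_nat_mul]
          congr 1
          field_simp
      _ ≤ Real.exp (-(3 * Real.log (1/ε))) := Real.exp_le_exp.mpr (by linarith)
      _ = ε ^ 3 := by
          rw [one_div, Real.log_inv]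
          rw [show -(3 * -Real.log ε) = Real.log ε + Real.log ε + Real.log ε by ring]
          rw [Real.exp_add, Real.exp_add, Real.exp_log hε0]
          ring
  calc ∑ σ : Fin t → {q : Fin n × Fin n // q.1 < q.2},
      (if ε ≤
          Real.sqrt
            ((traj (fun q : {q : Fin n × Fin n // q.1 < q.2} =>
                  pairAvgMatrix q.1.1 q.1.2) x0 t σ - c • fun _ => (1 : ℝ)) ⬝ᵥ
              (traj (fun q : {q : Fin n × Fin n // q.1 < q.2} =>
                  pairAvgMatrix q.1.1 q.1.2) x0 t σ - c • fun _ => (1 : ℝ))) /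
            Real.sqrt (x0 ⬝ᵥ x0)
        then ∏ _k : Fin t, ((C : ℝ))⁻¹ else 0)
      ≤ ∑ σ : Fin t → {q : Fin n × Fin n // q.1 < q.2},
        ((C:ℝ)⁻¹) ^ t *
          (traj (fun q : {q : Fin n × Fin n // q.1 < q.2} =>
              pairAvgMatrix q.1.1 q.1.2) y0 t σ ⬝ᵥ
            traj (fun q : {q : Fin n × Fin n // q.1 < q.2} =>
              pairAvgMatrix q.1.1 q.1.2) y0 t σ) / (ε ^ 2 * (x0 ⬝ᵥ x0)) := by
        refine Finset.sum_le_sum fun σ _ => ?_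
        set z : Fin n → ℝ := traj (fun q : {q : Fin n × Fin n // q.1 < q.2} =>
          pairAvgMatrix q.1.1 q.1.2) y0 t σ with hz
        have hz0 : 0 ≤ z ⬝ᵥ z := dot_self_nonneg z
        split_ifs with h
        · rw [hshift σ, ← hz] at h
          rw [hprod]
          have hsX : 0 < Real.sqrt (x0 ⬝ᵥ x0) := Real.sqrt_pos.mpr hX
          have h1 : ε * Real.sqrt (x0 ⬝ᵥ x0) ≤ Real.sqrt (z ⬝ᵥ z) := (le_div_iff₀ hsX).mp h
          have h2 : ε ^ 2 * (x0 ⬝ᵥ x0) ≤ z ⬝ᵥ z := by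
            have hm := mul_self_le_mul_self (by positivity) h1
            rw [Real.mul_self_sqrt hz0] at hm
            nlinarith [Real.mul_self_sqrt hX.le]
          rw [mul_div_assoc]
          refine le_mul_of_one_le_right (by positivity) ?_
          exact (one_le_div hεX).mpr h2
        · exact div_nonneg (mul_nonneg (by positivity) hz0) hεX.le
    _ = ((C:ℝ)⁻¹) ^ t * (((C:ℝ) - (n:ℝ)/2) ^ t * (y0 ⬝ᵥ y0)) / (ε ^ 2 * (x0 ⬝ᵥ x0)) := by
      rw [← Finset.sum_div, ← Finset.mul_sum, hexpect]
    _ = L ^ t * (y0 ⬝ᵥ y0) / (ε ^ 2 * (x0 ⬝ᵥ x0)) := by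
      rw [← mul_assoc, hLpow]
    _ ≤ ε ^ 3 * (x0 ⬝ᵥ x0) / (ε ^ 2 * (x0 ⬝ᵥ x0)) := by
      refine div_le_div₀ (by positivity) ?_ hεX le_rfl
      exact mul_le_mul hLt hy0le (dot_self_nonneg y0) (by positivity)
    _ = ε := by
      field_simp
end

section
/- Let D ⊂ ℝ² be a bounded measurable set of positive Lebesgue measure, let θ ∈ ℝ² and r > 0 be such that the closed ball B(θ, r) is contained in D, and let Y_1, Y_2, … be i.i.d. random points uniformly distributed on D. Then, almost surely, the centroid of the points falling in B(θ, r) converges to θ: (∑_{i=1}^n Y_i · 1_{{‖Y_i − θ‖ ≤ r}}) / (∑_{i=1}^n 1_{{‖Y_i − θ‖ ≤ r}}) → θ as n → ∞ (the denominator being almost surely positive for all sufficiently large n). In particular, the thresholded RSS source-localization estimator θ̂₁ is a consistent estimator of the source location as the number of uniformly deployed sensors grows. -/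
open MeasureTheory Filter

lemma integral_id_closedBall_aux (r : ℝ) (θ : EuclideanSpace ℝ (Fin 2)) :
    ∫ y in Metric.closedBall θ r, y = (volume (Metric.closedBall θ r)).toReal • θ := by
  have hint : ∀ c : EuclideanSpace ℝ (Fin 2), IntegrableOn (fun y : EuclideanSpace ℝ (Fin 2) => y)
      (Metric.closedBall c r) volume :=
    fun c => continuous_id.continuousOn.integrableOn_compact (isCompact_closedBall c r)
  have hzero : ∫ x in Metric.closedBall (0 : EuclideanSpace ℝ (Fin 2)) r, x = 0 := by
    have hmp : MeasurePreserving (Neg.neg : EuclideanSpace ℝ (Fin 2) → EuclideanSpace ℝ (Fin 2))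
        volume volume := Measure.measurePreserving_neg _
    have hemb : MeasurableEmbedding (Neg.neg : EuclideanSpace ℝ (Fin 2) → EuclideanSpace ℝ (Fin 2)) :=
      (Homeomorph.neg (EuclideanSpace ℝ (Fin 2))).measurableEmbedding
    have hpre : (Neg.neg ⁻¹' Metric.closedBall (0 : EuclideanSpace ℝ (Fin 2)) r) =
        Metric.closedBall 0 r := by
      ext x; simp [Metric.mem_closedBall, dist_zero_right]
    have h1 := hmp.setIntegral_preimage_emb hemb (fun y => y)
      (Metric.closedBall (0 : EuclideanSpace ℝ (Fin 2)) r)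
    rw [hpre] at h1
    have h2 : -(∫ x in Metric.closedBall (0 : EuclideanSpace ℝ (Fin 2)) r, x)
        = ∫ x in Metric.closedBall (0 : EuclideanSpace ℝ (Fin 2)) r, x := by
      rw [← integral_neg]; exact h1
    have h3 : (2 : ℝ) • (∫ x in Metric.closedBall (0 : EuclideanSpace ℝ (Fin 2)) r, x) = 0 := by
      rw [two_smul]; nth_rewrite 1 [← h2]; exact neg_add_cancel _
    simpa using (smul_eq_zero.mp h3).resolve_left (by norm_num)
  have hmp : MeasurePreserving (fun x : EuclideanSpace ℝ (Fin 2) => x + θ) volume volume :=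
    measurePreserving_add_right _ θ
  have hemb : MeasurableEmbedding (fun x : EuclideanSpace ℝ (Fin 2) => x + θ) :=
    (MeasurableEquiv.addRight θ).measurableEmbedding
  have hpre : ((fun x : EuclideanSpace ℝ (Fin 2) => x + θ) ⁻¹' Metric.closedBall θ r) =
      Metric.closedBall 0 r := by
    ext x
    simp only [Set.mem_preimage, Metric.mem_closedBall]
    rw [show dist (x + θ) θ = dist x 0 by simpa using dist_add_right x 0 θ]
  have h1 := hmp.setIntegral_preimage_emb hemb (fun y => y) (Metric.closedBall θ r)
  rw [hpre] at h1
  rw [← h1, integral_add (hint 0) (integrableOn_const (by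
    exact measure_closedBall_lt_top.ne)), hzero, zero_add, setIntegral_const, measureReal_def,
    Measure.addHaar_closedBall_center volume θ]

/-- Consistency of the thresholded RSS localization estimator.  Let `D ⊂ ℝ²` be a
bounded measurable set of positive measure containing the closed ball `B(θ, r)`,
and let `Y₁, Y₂, …` be i.i.d. uniform random points on `D`.  Then almost surely,
for all large `n` some point falls in `B(θ, r)`, and the centroid
`(∑_{i<n} Y_i 1_{‖Y_i − θ‖ ≤ r}) / (∑_{i<n} 1_{‖Y_i − θ‖ ≤ r})` converges to `θ`. -/
theorem centroid_of_uniform_points_in_ball_tendsto_center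
    {Ω : Type*} [MeasurableSpace Ω] (μ : Measure Ω) [IsProbabilityMeasure μ]
    (D : Set (EuclideanSpace ℝ (Fin 2))) (hDmeas : MeasurableSet D)
    (hDbdd : Bornology.IsBounded D) (hDpos : 0 < volume D)
    (θ : EuclideanSpace ℝ (Fin 2)) (r : ℝ) (hr : 0 < r)
    (hball : Metric.closedBall θ r ⊆ D)
    (Y : ℕ → Ω → EuclideanSpace ℝ (Fin 2)) (hYmeas : ∀ i, Measurable (Y i))
    (hYindep : ProbabilityTheory.iIndepFun Y μ)
    (hYunif : ∀ i, Measure.map (Y i) μ = (volume D)⁻¹ • volume.restrict D) :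
    ∀ᵐ ω ∂μ,
      (∃ N : ℕ, ∀ n ≥ N,
        (0 : ℝ) < ∑ i ∈ Finset.range n, (if dist (Y i ω) θ ≤ r then (1 : ℝ) else 0)) ∧
      Tendsto
        (fun n : ℕ =>
          (∑ i ∈ Finset.range n, (if dist (Y i ω) θ ≤ r then (1 : ℝ) else 0))⁻¹ •
            ∑ i ∈ Finset.range n,
              (if dist (Y i ω) θ ≤ r then (1 : ℝ) else 0) • Y i ω)
        atTop (nhds θ) := by
  classical
  set B : Set (EuclideanSpace ℝ (Fin 2)) := Metric.closedBall θ r with hB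
  have hBmeas : MeasurableSet B := measurableSet_closedBall
  set f : (EuclideanSpace ℝ (Fin 2)) → ℝ := fun y => if dist y θ ≤ r then (1 : ℝ) else 0 with hf
  set g : (EuclideanSpace ℝ (Fin 2)) → (EuclideanSpace ℝ (Fin 2)) := fun y => f y • y with hg
  have hfmeas : Measurable f := by
    apply Measurable.ite _ measurable_const measurable_const
    exact hBmeas
  have hgmeas : Measurable g := hfmeas.smul measurable_id
  -- the common law
  set ν : Measure (EuclideanSpace ℝ (Fin 2)) := (volume D)⁻¹ • volume.restrict D with hν
  have hDfin : volume D < ⊤ := hDbdd.measure_lt_top (μ := volume)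
  have hBvol_pos : 0 < volume B :=
    lt_of_lt_of_le (Metric.measure_ball_pos volume θ hr) (measure_mono Metric.ball_subset_closedBall)
  have hBvol_fin : volume B < ⊤ := measure_closedBall_lt_top
  have hνB : ν B = (volume D)⁻¹ * volume B := by
    rw [hν, Measure.smul_apply, Measure.restrict_apply hBmeas, Set.inter_eq_left.2 hball,
      smul_eq_mul]
  set p : ℝ := ((volume D)⁻¹ * volume B).toReal with hp
  have hp_pos : 0 < p := by
    apply ENNReal.toReal_pos
    · exact (ENNReal.mul_pos (by simp [hDfin.ne]) hBvol_pos.ne').ne'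
    · exact ENNReal.mul_ne_top (by simpa using ENNReal.inv_ne_top.2 hDpos.ne') hBvol_fin.ne
  -- identical distribution and independence
  have hid : ∀ i, ProbabilityTheory.IdentDistrib (Y i) (Y 0) μ μ := fun i =>
    ⟨(hYmeas i).aemeasurable, (hYmeas 0).aemeasurable, (hYunif i).trans (hYunif 0).symm⟩
  have hWid : ∀ i, ProbabilityTheory.IdentDistrib (fun ω => f (Y i ω)) (fun ω => f (Y 0 ω)) μ μ :=
    fun i => (hid i).comp hfmeas
  have hZid : ∀ i, ProbabilityTheory.IdentDistrib (fun ω => g (Y i ω)) (fun ω => g (Y 0 ω)) μ μ :=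
    fun i => (hid i).comp hgmeas
  have hWindep : Pairwise (Function.onFun (ProbabilityTheory.IndepFun · · μ) fun i ω => f (Y i ω)) :=
    fun i j hij => (hYindep.indepFun hij).comp hfmeas hfmeas
  have hZindep : Pairwise (Function.onFun (ProbabilityTheory.IndepFun · · μ) fun i ω => g (Y i ω)) :=
    fun i j hij => (hYindep.indepFun hij).comp hgmeas hgmeas
  -- integrability
  have hWint : Integrable (fun ω => f (Y 0 ω)) μ := by
    apply Integrable.mono' (integrable_const (1 : ℝ))
      ((hfmeas.comp (hYmeas 0)).aestronglyMeasurable)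
    filter_upwards with ω
    show ‖f (Y 0 ω)‖ ≤ 1
    by_cases h : dist (Y 0 ω) θ ≤ r <;> simp [hf, h]
  have hZint : Integrable (fun ω => g (Y 0 ω)) μ := by
    apply Integrable.mono' (integrable_const (‖θ‖ + r))
      ((hgmeas.comp (hYmeas 0)).aestronglyMeasurable)
    filter_upwards with ω
    show ‖g (Y 0 ω)‖ ≤ ‖θ‖ + r
    by_cases h : dist (Y 0 ω) θ ≤ r
    · simp only [hg, hf, h, if_true, one_smul]
      calc ‖Y 0 ω‖ = ‖(Y 0 ω - θ) + θ‖ := by rw [sub_add_cancel]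
        _ ≤ ‖Y 0 ω - θ‖ + ‖θ‖ := norm_add_le _ _
        _ ≤ r + ‖θ‖ := by
            rw [← dist_eq_norm]; exact add_le_add_left h _
        _ = ‖θ‖ + r := by ring
    · show ‖(if dist (Y 0 ω) θ ≤ r then (1:ℝ) else 0) • Y 0 ω‖ ≤ ‖θ‖ + r
      simp [h, add_nonneg (norm_nonneg θ) hr.le]
  -- expectations
  have hWexp : ∫ ω, f (Y 0 ω) ∂μ = p := by
    rw [← integral_map (hYmeas 0).aemeasurable hfmeas.aestronglyMeasurable, hYunif 0]
    have hfind : f = Set.indicator B (1 : EuclideanSpace ℝ (Fin 2) → ℝ) := by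
      ext y
      by_cases h : dist y θ ≤ r <;>
        simp [hf, h, Set.indicator_apply, hB, Metric.mem_closedBall]
    rw [hfind]
    rw [integral_indicator_one hBmeas]
    rw [measureReal_def, hνB]
  have hZexp : ∫ ω, g (Y 0 ω) ∂μ = p • θ := by
    rw [← integral_map (hYmeas 0).aemeasurable hgmeas.aestronglyMeasurable, hYunif 0]
    have hgind : g = Set.indicator B (fun y => y) := by
      ext y
      by_cases h : dist y θ ≤ r <;>
        simp [hg, hf, h, Set.indicator_apply, hB, Metric.mem_closedBall]
    rw [hgind, integral_smul_measure, setIntegral_indicator hBmeas,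
      Set.inter_eq_right.2 hball, integral_id_closedBall_aux, ← hB, smul_smul,
      hp, ENNReal.toReal_mul]
  -- strong law of large numbers
  have hW := ProbabilityTheory.strong_law_ae_real (fun i ω => f (Y i ω)) hWint hWindep hWid
  have hZ := ProbabilityTheory.strong_law_ae (fun i ω => g (Y i ω)) hZint hZindep hZid
  rw [hWexp] at hW
  rw [hZexp] at hZ
  filter_upwards [hW, hZ] with ω hWω hZω
  set Sw : ℕ → ℝ := fun n => ∑ i ∈ Finset.range n, (if dist (Y i ω) θ ≤ r then (1 : ℝ) else 0)
    with hSw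
  set Sz : ℕ → (EuclideanSpace ℝ (Fin 2)) := fun n => ∑ i ∈ Finset.range n,
    (if dist (Y i ω) θ ≤ r then (1 : ℝ) else 0) • Y i ω with hSz
  have hWω' : Tendsto (fun n : ℕ => Sw n / n) atTop (nhds p) := hWω
  have hZω' : Tendsto (fun n : ℕ => (n : ℝ)⁻¹ • Sz n) atTop (nhds (p • θ)) := hZω
  have hev : ∀ᶠ n in atTop, p / 2 < Sw n / n :=
    hWω'.eventually (eventually_gt_nhds (by linarith))
  have hkey : ∀ n : ℕ, p / 2 < Sw n / n → (0 < Sw n ∧ n ≠ 0) := by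
    intro n hn
    have hn0 : n ≠ 0 := by
      rintro rfl
      simp [hSw] at hn
      linarith
    refine ⟨?_, hn0⟩
    have h1 : (0 : ℝ) < Sw n / n := lt_trans (by linarith) hn
    have h2 : (0 : ℝ) < (n : ℝ) := Nat.cast_pos.2 (Nat.pos_of_ne_zero hn0)
    have := mul_pos h1 h2
    rwa [div_mul_cancel₀ _ h2.ne'] at this
  constructor
  · obtain ⟨N, hN⟩ := eventually_atTop.1 hev
    exact ⟨N, fun n hn => (hkey n (hN n hn)).1⟩
  · have hlim : Tendsto (fun n : ℕ => (Sw n / n)⁻¹ • ((n : ℝ)⁻¹ • Sz n)) atTop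
        (nhds (p⁻¹ • (p • θ))) :=
      (hWω'.inv₀ hp_pos.ne').smul hZω'
    rw [smul_smul, inv_mul_cancel₀ hp_pos.ne', one_smul] at hlim
    apply hlim.congr'
    filter_upwards [hev] with n hn
    obtain ⟨hSwpos, hn0⟩ := hkey n hn
    have hn' : ((n : ℝ)) ≠ 0 := Nat.cast_ne_zero.2 hn0
    show (Sw n / n)⁻¹ • ((n : ℝ)⁻¹ • Sz n) = (Sw n)⁻¹ • Sz n
    rw [smul_smul, inv_div]
    congr 1
    field_simp
end
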